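/- Let F be a field, let n ≥ 2, let x ∈ F with x ≠ 0, and let y ∈ F. Then the n×n Zhang–Liu matrix Q(y,x) is diagonalizable over F (i.e., there exists an invertible n×n matrix S over F such that S⁻¹ · Q(y,x) · S is a diagonal matrix) if and only if x ∉ {1, -1} or y = 0. -/

import Mathlib

open Matrix Finset

/-- Generalized Pascal matrix of the first kind: with 1-based indexing the (i,j) entry is
`y^(j-i) * binom(j-1, i-1)` for `j ≥ i` and `0` otherwise. Here indices are 0-based. -/
def pascal1 {R : Type*} [CommRing R] (n : ℕ) (y : R) : Matrix (Fin n) (Fin n) R :=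
  Matrix.of fun i j => if i ≤ j then y ^ (j.val - i.val) * (Nat.choose j.val i.val : R) else 0

/-- Zhang–Liu matrix: with 1-based indexing the (i,j) entry is
`y^(j-i) * x^(i+j-2) * binom(j-1, i-1)` for `j ≥ i` and `0` otherwise. Indices 0-based here. -/
def zhangLiu {R : Type*} [CommRing R] (n : ℕ) (y x : R) : Matrix (Fin n) (Fin n) R :=
  Matrix.of fun i j =>
    if i ≤ j then y ^ (j.val - i.val) * x ^ (i.val + j.val) * (Nat.choose j.val i.val : R) else 0

/-- `D(α)` : the diagonal matrix with (i,i) entry `α^(i-1)` (1-based), i.e. `α^i` 0-based. -/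
def diagD {R : Type*} [CommRing R] (n : ℕ) (α : R) : Matrix (Fin n) (Fin n) R :=
  Matrix.diagonal fun i : Fin n => α ^ i.val

section Aux
variable {R : Type*} [CommRing R]

lemma sum_helper {n : ℕ} (i j : Fin n) (f g : ℕ → R) :
    (∑ k : Fin n, (if i ≤ k then f k.val else 0) * (if k ≤ j then g k.val else 0))
      = if i ≤ j then
          ∑ m ∈ Finset.range (j.val + 1 - i.val), f (i.val + m) * g (i.val + m)
        else 0 := by
  have hrw : (∑ k : Fin n, (if i ≤ k then f k.val else 0) * (if k ≤ j then g k.val else 0))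
      = ∑ k ∈ Finset.range n,
          (if i.val ≤ k then f k else 0) * (if k ≤ j.val then g k else 0) := by
    rw [← Fin.sum_univ_eq_sum_range
      (fun k => (if i.val ≤ k then f k else 0) * (if k ≤ j.val then g k else 0)) n]
    exact Finset.sum_congr rfl fun k _ => by simp only [Fin.le_def]
  rw [hrw]
  by_cases h : i ≤ j
  · rw [if_pos h]
    have hij : i.val ≤ j.val := h
    have hsub : Finset.Ico i.val (j.val + 1) ⊆ Finset.range n := fun k hk => by
      simp only [Finset.mem_Ico] at hk
      exact Finset.mem_range.mpr (lt_of_lt_of_le hk.2 j.isLt)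
    rw [← Finset.sum_subset hsub (fun k _ hk => by
      simp only [Finset.mem_Ico, not_and_or, not_le, not_lt] at hk
      rcases hk with hk | hk
      · rw [if_neg (show ¬ i.val ≤ k by omega), zero_mul]
      · rw [if_neg (show ¬ k ≤ j.val by omega), mul_zero])]
    rw [Finset.sum_Ico_eq_sum_range]
    exact Finset.sum_congr rfl fun m hm => by
      rw [Finset.mem_range] at hm
      rw [if_pos (show i.val ≤ i.val + m by omega), if_pos (show i.val + m ≤ j.val by omega)]
  · rw [if_neg h]
    have hij : j.val < i.val := by
      rw [Fin.le_def, not_le] at h; exact h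
    exact Finset.sum_eq_zero fun k _ => by
      by_cases hik : i.val ≤ k
      · rw [if_neg (show ¬ k ≤ j.val by omega), mul_zero]
      · rw [if_neg hik, zero_mul]

lemma choose_convR (i d m : ℕ) (hm : m ≤ d) :
    ((i + d).choose (i + m) : R) * ((i + m).choose i : R)
      = ((i + d).choose i : R) * (d.choose m : R) := by
  have h := Nat.choose_mul (n := i + d) (k := i + m) (s := i)
    (by omega)
  have h2 : (i + d).choose (i + m) * (i + m).choose i
      = (i + d).choose i * d.choose m := by
    rw [h, show i + d - i = d by omega, show i + m - i = m by omega]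
  exact_mod_cast congrArg (Nat.cast : ℕ → R) h2

lemma scalar1 (a b : R) (i d : ℕ) :
    ∑ m ∈ Finset.range (d + 1),
        (a ^ (i + m - i) * (Nat.choose (i + m) i : R))
          * (b ^ (i + d - (i + m)) * (Nat.choose (i + d) (i + m) : R))
      = (a + b) ^ (i + d - i) * (Nat.choose (i + d) i : R) := by
  rw [show i + d - i = d by omega, add_pow, Finset.sum_mul]
  refine Finset.sum_congr rfl fun m hm => ?_
  rw [Finset.mem_range] at hm
  have hm' : m ≤ d := by omega
  rw [show i + m - i = m by omega, show i + d - (i + m) = d - m by omega]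
  linear_combination (a ^ m * b ^ (d - m)) * choose_convR (R := R) i d m hm'

lemma scalar2 (x y c : R) (hc : y * x + c = c * x ^ 2) (i d : ℕ) :
    ∑ m ∈ Finset.range (d + 1),
        (y ^ (i + m - i) * x ^ (i + (i + m)) * (Nat.choose (i + m) i : R))
          * (c ^ (i + d - (i + m)) * (Nat.choose (i + d) (i + m) : R))
      = (c ^ (i + d - i) * (Nat.choose (i + d) i : R)) * (x ^ 2) ^ (i + d) := by
  have key : (c ^ d * (Nat.choose (i + d) i : R)) * (x ^ 2) ^ (i + d)
      = (Nat.choose (i + d) i : R) * (x ^ 2) ^ i * (y * x + c) ^ d := by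
    rw [hc, mul_pow, pow_add]; ring
  rw [show i + d - i = d by omega, key, add_pow, Finset.mul_sum]
  refine Finset.sum_congr rfl fun m hm => ?_
  rw [Finset.mem_range] at hm
  have hm' : m ≤ d := by omega
  rw [show i + m - i = m by omega, show i + d - (i + m) = d - m by omega,
    show i + (i + m) = 2 * i + m by omega, pow_add, pow_mul]
  linear_combination (y ^ m * (x ^ 2) ^ i * x ^ m * c ^ (d - m))
    * choose_convR (R := R) i d m hm'

lemma pascal1_zero (n : ℕ) : pascal1 n (0 : R) = 1 := by
  ext i j
  simp only [pascal1, Matrix.of_apply, Matrix.one_apply]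
  rcases lt_trichotomy i j with h | h | h
  · rw [if_pos h.le, if_neg h.ne,
      zero_pow (show j.val - i.val ≠ 0 by have := Fin.lt_def.mp h; omega), zero_mul]
  · subst h; rw [if_pos le_rfl, if_pos rfl]; simp
  · rw [if_neg (not_le.mpr h), if_neg h.ne']

lemma pascal1_mul (n : ℕ) (a b : R) :
    pascal1 n a * pascal1 n b = pascal1 n (a + b) := by
  ext i j
  rw [Matrix.mul_apply]
  simp only [pascal1, Matrix.of_apply]
  rw [sum_helper i j (fun k => a ^ (k - i.val) * (Nat.choose k i.val : R))
      (fun k => b ^ (j.val - k) * (Nat.choose j.val k : R))]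
  by_cases h : i ≤ j
  · rw [if_pos h, if_pos h]
    obtain ⟨d, hd⟩ := Nat.exists_eq_add_of_le (show i.val ≤ j.val from h)
    rw [hd, show i.val + d + 1 - i.val = d + 1 by omega]
    exact scalar1 a b i.val d
  · rw [if_neg h, if_neg h]

lemma zhangLiu_mul_pascal1 (n : ℕ) (x y c : R) (hc : y * x + c = c * x ^ 2) :
    zhangLiu n y x * pascal1 n c = pascal1 n c * diagD n (x ^ 2) := by
  ext i j
  rw [show (pascal1 n c * diagD n (x ^ 2)) i j
      = pascal1 n c i j * (x ^ 2) ^ j.val from by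
    simp only [diagD]; rw [Matrix.mul_diagonal]]
  rw [Matrix.mul_apply]
  simp only [zhangLiu, pascal1, Matrix.of_apply]
  rw [sum_helper i j
      (fun k => y ^ (k - i.val) * x ^ (i.val + k) * (Nat.choose k i.val : R))
      (fun k => c ^ (j.val - k) * (Nat.choose j.val k : R))]
  by_cases h : i ≤ j
  · rw [if_pos h, if_pos h]
    obtain ⟨d, hd⟩ := Nat.exists_eq_add_of_le (show i.val ≤ j.val from h)
    rw [hd, show i.val + d + 1 - i.val = d + 1 by omega]
    exact scalar2 x y c hc i.val d
  · rw [if_neg h, if_neg h, zero_mul]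

lemma strict_tri_pow {n : ℕ} (M : Matrix (Fin n) (Fin n) R)
    (h : ∀ i j : Fin n, j.val ≤ i.val → M i j = 0) :
    ∀ (k : ℕ) (i j : Fin n), j.val < i.val + k → (M ^ k) i j = 0 := by
  intro k
  induction k with
  | zero =>
      intro i j hj
      rw [pow_zero, Matrix.one_apply_ne]
      intro hij; subst hij; omega
  | succ k ih =>
      intro i j hj
      rw [pow_succ, Matrix.mul_apply]
      refine Finset.sum_eq_zero fun l _ => ?_
      by_cases hl : l.val < i.val + k
      · rw [ih i l hl, zero_mul]
      · rw [h l j (by omega), mul_zero]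

end Aux

theorem zhangLiu_diagonalizable_iff {F : Type*} [Field F] (n : ℕ) (hn : 2 ≤ n)
    (x y : F) (hx : x ≠ 0) :
    (∃ S : Matrix (Fin n) (Fin n) F, IsUnit S ∧ (S⁻¹ * zhangLiu n y x * S).IsDiag) ↔
      (x ≠ 1 ∧ x ≠ -1) ∨ y = 0 := by
  constructor
  · rintro ⟨S, hS, hdiag⟩
    by_contra hcon
    push_neg at hcon
    obtain ⟨h1, hy⟩ := hcon
    have hx2 : x ^ 2 = 1 := by
      by_cases h : x = 1
      · rw [h]; ring
      · rw [h1 h]; ring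
    have hdet : IsUnit S.det := (Matrix.isUnit_iff_isUnit_det S).mp hS
    set Q := zhangLiu n y x with hQdef
    set N := Q - 1 with hNdef
    have hN : ∀ i j : Fin n, j.val ≤ i.val → N i j = 0 := by
      intro i j hji
      rcases eq_or_lt_of_le hji with heq | hlt
      · have hij : i = j := Fin.ext heq.symm
        subst hij
        simp only [hNdef, hQdef, Matrix.sub_apply, zhangLiu, Matrix.of_apply,
          Matrix.one_apply_eq, if_pos (le_refl i)]
        rw [Nat.sub_self, pow_zero, Nat.choose_self, Nat.cast_one,
          show i.val + i.val = 2 * i.val by omega, pow_mul, hx2, one_pow]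
        ring
      · have hij : ¬ i ≤ j := by rw [Fin.le_def, not_le]; exact hlt
        have hne : i ≠ j := fun hc => by subst hc; omega
        simp only [hNdef, hQdef, Matrix.sub_apply, zhangLiu, Matrix.of_apply,
          if_neg hij, Matrix.one_apply_ne hne]
        ring
    have hNpow : N ^ n = 0 := by
      ext i j
      rw [Matrix.zero_apply]
      exact strict_tri_pow N hN n i j (by omega)
    have hconj : ∀ k : ℕ, (S⁻¹ * N * S) ^ k = S⁻¹ * N ^ k * S := by
      intro k
      induction k with
      | zero => rw [pow_zero, pow_zero, Matrix.mul_one, Matrix.nonsing_inv_mul S hdet]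
      | succ k ih =>
          rw [pow_succ, ih, pow_succ]
          simp only [Matrix.mul_assoc]
          rw [Matrix.mul_nonsing_inv_cancel_left S _ hdet]
    have hDN : S⁻¹ * Q * S - 1 = S⁻¹ * N * S := by
      rw [hNdef, Matrix.mul_sub, Matrix.mul_one, Matrix.sub_mul,
        Matrix.nonsing_inv_mul S hdet]
    have hE : (S⁻¹ * Q * S - 1) ^ n = 0 := by
      rw [hDN, hconj n, hNpow, Matrix.mul_zero, Matrix.zero_mul]
    have hEdiag : (S⁻¹ * Q * S - 1).IsDiag := hdiag.sub Matrix.isDiag_one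
    have hD1 : S⁻¹ * Q * S = 1 := by
      have h2 : Matrix.diagonal ((S⁻¹ * Q * S - 1).diag) = S⁻¹ * Q * S - 1 :=
        hEdiag.diagonal_diag
      have h3 : ∀ i : Fin n, (S⁻¹ * Q * S - 1) i i = 0 := by
        intro i
        have h4 := congrArg (fun M => M i i) hE
        rw [← h2, Matrix.diagonal_pow] at h4
        simp only [Matrix.diagonal_apply_eq, Matrix.zero_apply, Pi.pow_apply,
          Matrix.diag_apply] at h4
        exact pow_eq_zero_iff (by omega) |>.mp h4
      ext i j
      by_cases hij : i = j
      · subst hij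
        have := h3 i
        rw [Matrix.sub_apply, Matrix.one_apply_eq, sub_eq_zero] at this
        rw [this, Matrix.one_apply_eq]
      · rw [hdiag hij, Matrix.one_apply_ne hij]
    have hQ1 : Q = 1 := by
      have h4 : S * (S⁻¹ * Q * S) * S⁻¹ = Q := by
        simp only [Matrix.mul_assoc]
        rw [Matrix.mul_nonsing_inv_cancel_left S _ hdet,
          ← Matrix.mul_assoc, Matrix.mul_nonsing_inv_cancel_right S Q hdet]
      rw [hD1, Matrix.mul_one, Matrix.mul_nonsing_inv S hdet] at h4
      exact h4.symm
    have h0 : (⟨0, by omega⟩ : Fin n) ≠ (⟨1, by omega⟩ : Fin n) :=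
      Fin.ne_of_val_ne (by norm_num)
    have h5 := congrArg (fun M => M (⟨0, by omega⟩ : Fin n) (⟨1, by omega⟩ : Fin n)) hQ1
    simp only [hQdef, zhangLiu, Matrix.of_apply, Matrix.one_apply_ne h0] at h5
    rw [if_pos (by rw [Fin.le_def]; norm_num)] at h5
    norm_num at h5
    rcases h5 with h5 | h5
    · exact hy h5
    · exact hx h5
  · rintro (⟨hx1, hxm1⟩ | hy0)
    · have hden : x ^ 2 - 1 ≠ 0 := by
        intro h
        have h' : (x - 1) * (x + 1) = 0 := by linear_combination h
        rcases mul_eq_zero.mp h' with h'' | h''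
        · exact hx1 (sub_eq_zero.mp h'')
        · exact hxm1 (eq_neg_of_add_eq_zero_left h'')
      set c := y * x / (x ^ 2 - 1) with hcdef
      have hc : y * x + c = c * x ^ 2 := by
        rw [hcdef]; field_simp; ring
      have hu1 : pascal1 n c * pascal1 n (-c) = 1 := by
        rw [pascal1_mul, add_neg_cancel, pascal1_zero]
      have hu2 : pascal1 n (-c) * pascal1 n c = 1 := by
        rw [pascal1_mul, neg_add_cancel, pascal1_zero]
      have hU : IsUnit (pascal1 n c) := ⟨⟨_, _, hu1, hu2⟩, rfl⟩
      refine ⟨pascal1 n c, hU, ?_⟩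
      have hdet : IsUnit (pascal1 n c).det := (Matrix.isUnit_iff_isUnit_det _).mp hU
      rw [Matrix.mul_assoc, zhangLiu_mul_pascal1 n x y c hc, ← Matrix.mul_assoc,
        Matrix.nonsing_inv_mul _ hdet, Matrix.one_mul]
      simp only [diagD]
      exact Matrix.isDiag_diagonal _
    · subst hy0
      refine ⟨1, isUnit_one, ?_⟩
      rw [inv_one, Matrix.one_mul, Matrix.mul_one]
      intro i j hij
      simp only [zhangLiu, Matrix.of_apply]
      by_cases h : i ≤ j
      · rw [if_pos h, zero_pow (show j.val - i.val ≠ 0 by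
          have h1 : i.val ≤ j.val := h
          have h2 : i.val ≠ j.val := fun hc => hij (Fin.ext hc)
          omega), zero_mul, zero_mul]
      · rw [if_neg h]
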